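/- Corollary 4.7 (harmonic martingales): Assume (BR) with constant branching ratio ρ ∈ (1,∞). Let (f_n)_{n≥0} be a uniformly bounded sequence of functions f_n : X → ℝ which is space-time harmonic for the base chain: f_n(x) = Σ_{y∈X} p(x,y)·f_{n+1}(y) for all x ∈ X, n ≥ 0. Then the functions g_n(m) = ρ^{−n}·⟨m, f_n⟩ on M satisfy ∫_M g_{n+1}(m') dK(m)(m') = g_n(m) for all m ∈ M and n ≥ 0; consequently, for every initial population m, the sequence W^f_n = ρ^{−n}·⟨M_n, f_n⟩ is a martingale under ℙ_m with respect to the coordinate filtration. -/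

import Mathlib

open MeasureTheory ProbabilityTheory Filter Topology
open scoped ENNReal NNReal Classical

namespace BMC

variable {X : Type*}

/-- the population space `X →₀ ℕ` over a countable set carries the discrete σ-algebra -/
instance : MeasurableSpace (X →₀ ℕ) := ⊤

/-- size (total mass) of a population -/
def popSize (m : X →₀ ℕ) : ℕ := m.sum fun _ k => k

/-- convolution of measures on populations: pushforward of the product measure under addition -/
noncomputable def popConv (μ ν : Measure (X →₀ ℕ)) : Measure (X →₀ ℕ) :=
  (μ.prod ν).map fun p => p.1 + p.2

/-- the coordinate filtration on the trajectory space `ℕ → Y` -/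
def coordFil (Y : Type*) [mY : MeasurableSpace Y] :
    Filtration ℕ (MeasurableSpace.pi : MeasurableSpace (ℕ → Y)) where
  seq n := ⨆ i ∈ Set.Iic n, MeasurableSpace.comap (fun ω : ℕ → Y => ω i) mY
  mono' a b hab := biSup_mono fun i (hi : i ≤ a) => hi.trans hab
  le' n := iSup₂_le fun i _ => measurable_iff_comap_le.mp (measurable_pi_apply i)

instance : MeasurableSingletonClass (X →₀ ℕ) :=
  ⟨fun _ => MeasurableSpace.measurableSet_top⟩

lemma meas_all {β : Type*} [MeasurableSpace β] [Countable X] (g : (X →₀ ℕ) → β) :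
    Measurable g := measurable_of_countable g

/-- real pairing ⟨m, f⟩ -/
def pairR (f : X → ℝ) (m : X →₀ ℕ) : ℝ := m.sum fun x k => (k : ℝ) * f x

lemma pairR_add (f : X → ℝ) (a b : X →₀ ℕ) :
    pairR f (a + b) = pairR f a + pairR f b := by
  unfold pairR
  exact Finsupp.sum_add_index' (fun x => by simp) (fun x k₁ k₂ => by push_cast; ring)

lemma pairR_zero (f : X → ℝ) : pairR f 0 = 0 := by simp [pairR]

lemma pairR_single (f : X → ℝ) (x : X) : pairR f (Finsupp.single x 1) = f x := by
  simp [pairR, Finsupp.sum_single_index]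

lemma popSize_add (a b : X →₀ ℕ) : popSize (a + b) = popSize a + popSize b := by
  unfold popSize
  exact Finsupp.sum_add_index' (fun x => rfl) (fun x k₁ k₂ => rfl)

lemma popSize_single (x : X) : popSize (Finsupp.single x 1) = 1 := by
  simp [popSize, Finsupp.sum_single_index]

lemma popSize_zero : popSize (0 : X →₀ ℕ) = 0 := by simp [popSize]

lemma popR (m : X →₀ ℕ) : (popSize m : ℝ) = m.sum fun _ k => (k : ℝ) := by
  simp [popSize, Finsupp.sum]

lemma pairR_nonneg {f : X → ℝ} (hf : ∀ x, 0 ≤ f x) (m : X →₀ ℕ) : 0 ≤ pairR f m :=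
  Finset.sum_nonneg fun x _ => mul_nonneg (by positivity) (hf x)

lemma pairR_le {f : X → ℝ} {B : ℝ} (hf : ∀ x, f x ≤ B) (hf0 : ∀ x, 0 ≤ f x)
    (m : X →₀ ℕ) : pairR f m ≤ B * popSize m := by
  have : pairR f m ≤ m.sum fun x k => (k : ℝ) * B := by
    refine Finset.sum_le_sum fun x _ => ?_
    exact mul_le_mul_of_nonneg_left (hf x) (by positivity)
  refine this.trans_eq ?_
  rw [popR, Finsupp.sum, Finsupp.sum, ← Finset.sum_mul, mul_comm]

lemma pairR_tsum (f : X → ℝ) (m : X →₀ ℕ) [Countable X] :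
    pairR f m = ∑' y, (m y : ℝ) * f y := by
  refine (tsum_eq_sum (s := m.support) fun y hy => ?_).symm
  simp [Finsupp.notMem_support_iff.mp hy]

lemma popE (m : X →₀ ℕ) [Countable X] : (popSize m : ℝ≥0∞) = ∑' y, (m y : ℝ≥0∞) := by
  rw [(tsum_eq_sum (s := m.support) fun y hy => by
    simp [Finsupp.notMem_support_iff.mp hy] : (∑' y, (m y : ℝ≥0∞)) = _)]
  simp [popSize, Finsupp.sum]

lemma coord_le_popE (m : X →₀ ℕ) (y : X) [Countable X] :
    (m y : ℝ≥0∞) ≤ (popSize m : ℝ≥0∞) := by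
  rw [popE]; exact ENNReal.le_tsum y

lemma lintegral_K_ind [Countable X]
    (K : Kernel (X →₀ ℕ) (X →₀ ℕ)) [IsMarkovKernel K]
    (hK0 : K 0 = Measure.dirac 0)
    (hKadd : ∀ m m' : X →₀ ℕ, K (m + m') = popConv (K m) (K m'))
    (h g : (X →₀ ℕ) → ℝ≥0∞)
    (hadd : ∀ a b, h (a + b) = h a + h b)
    (h0 : h 0 = 0) (g0 : g 0 = 0)
    (gadd : ∀ a b, g (a + b) = g a + g b)
    (hsingle : ∀ x : X, ∫⁻ a, h a ∂(K (Finsupp.single x 1)) = g (Finsupp.single x 1)) :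
    ∀ m, ∫⁻ a, h a ∂(K m) = g m := by
  -- strong induction on popSize
  suffices H : ∀ n (m : X →₀ ℕ), popSize m = n → ∫⁻ a, h a ∂(K m) = g m from
    fun m => H _ m rfl
  intro n
  induction n using Nat.strong_induction_on with
  | _ n ih =>
  intro m hn
  rcases Nat.eq_zero_or_pos n with h0n | hpos
  · subst h0n
    have hmz : m = 0 := by
      ext x
      have hx : m x ≤ popSize m := by
        by_cases hx : x ∈ m.support
        · exact Finset.single_le_sum (f := fun y => m y) (fun _ _ => Nat.zero_le _) hx
        · simp [Finsupp.notMem_support_iff.mp hx]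
      simp only [Finsupp.coe_zero, Pi.zero_apply]
      omega
    subst hmz
    rw [hK0, lintegral_dirac' _ (meas_all h), h0, g0]
  · -- m ≠ 0, pick x in support
    have hm : m ≠ 0 := by
      rintro rfl; simp [popSize_zero] at hn; omega
    obtain ⟨x, hx⟩ := Finsupp.support_nonempty_iff.mpr hm
    have hx' : 1 ≤ m x := Nat.one_le_iff_ne_zero.mpr (Finsupp.mem_support_iff.mp hx)
    have hle : Finsupp.single x 1 ≤ m := Finsupp.single_le_iff.mpr hx'
    set m' := m - Finsupp.single x 1 with hm'
    have hdec : m' + Finsupp.single x 1 = m := tsub_add_cancel_of_le hle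
    have hpop : popSize m' + 1 = n := by
      rw [← hn, ← hdec, popSize_add, popSize_single]
    have hKm : K m = popConv (K m') (K (Finsupp.single x 1)) := by
      rw [← hdec, hKadd]
    have ih' : ∫⁻ a, h a ∂(K m') = g m' := ih (popSize m') (by omega) m' rfl
    have hconv : ∫⁻ a, h a ∂(K m) = g m' + g (Finsupp.single x 1) := by
      rw [hKm, popConv, lintegral_map (meas_all h) (by
        exact measurable_of_countable _),
        lintegral_prod _ (by exact (measurable_of_countable _).aemeasurable)]
      have : ∀ a : X →₀ ℕ, ∫⁻ b, h (a + b) ∂(K (Finsupp.single x 1))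
          = h a + g (Finsupp.single x 1) := by
        intro a
        simp only [hadd]
        rw [lintegral_add_left (meas_all fun _ => h a), hsingle, lintegral_const,
          measure_univ, mul_one]
      simp only [this]
      rw [lintegral_add_right _ (measurable_const), ih', lintegral_const,
        measure_univ, mul_one]
    rw [hconv, ← gadd, hdec]


section ChunkC
variable [Countable X]
variable (Pibr : X → Measure (X →₀ ℕ)) (hPibr : ∀ x, IsProbabilityMeasure (Pibr x))
variable (K : Kernel (X →₀ ℕ) (X →₀ ℕ)) [IsMarkovKernel K]
variable (ρ : ℝ)

lemma lam_tsum (hBR : ∀ x : X, ∫⁻ m, (popSize m : ℝ≥0∞) ∂(Pibr x) = ENNReal.ofReal ρ)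
    (x : X) : ∑' y, ∫⁻ a, (a y : ℝ≥0∞) ∂(Pibr x) = ENNReal.ofReal ρ := by
  rw [← lintegral_tsum (fun y => (meas_all _).aemeasurable)]
  simp only [← popE]
  exact hBR x

lemma lam_ne_top (hBR : ∀ x : X, ∫⁻ m, (popSize m : ℝ≥0∞) ∂(Pibr x) = ENNReal.ofReal ρ)
    (x : X) (y : X) : ∫⁻ a, (a y : ℝ≥0∞) ∂(Pibr x) ≠ ∞ := by
  have h1 : ∫⁻ a, (a y : ℝ≥0∞) ∂(Pibr x) ≤ ∑' y, ∫⁻ a, (a y : ℝ≥0∞) ∂(Pibr x) :=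
    ENNReal.le_tsum y
  rw [lam_tsum Pibr ρ hBR x] at h1
  exact ne_top_of_le_ne_top ENNReal.ofReal_ne_top h1

lemma lam_summable (hBR : ∀ x : X, ∫⁻ m, (popSize m : ℝ≥0∞) ∂(Pibr x) = ENNReal.ofReal ρ)
    (x : X) : Summable fun y => (∫⁻ a, (a y : ℝ≥0∞) ∂(Pibr x)).toReal :=
  ENNReal.summable_toReal (by rw [lam_tsum Pibr ρ hBR x]; exact ENNReal.ofReal_ne_top)

lemma sizestep (hK0 : K 0 = Measure.dirac 0)
    (hKs : ∀ x : X, K (Finsupp.single x 1) = Pibr x)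
    (hKadd : ∀ m m' : X →₀ ℕ, K (m + m') = popConv (K m) (K m'))
    (hBR : ∀ x : X, ∫⁻ m, (popSize m : ℝ≥0∞) ∂(Pibr x) = ENNReal.ofReal ρ) :
    ∀ m, ∫⁻ a, (popSize a : ℝ≥0∞) ∂(K m) = ENNReal.ofReal ρ * (popSize m : ℝ≥0∞) := by
  refine lintegral_K_ind K hK0 hKadd _ _ ?_ ?_ ?_ ?_ ?_
  · intro a b; rw [popSize_add]; push_cast; ring
  · simp [popSize_zero]
  · simp [popSize_zero]
  · intro a b; rw [popSize_add]; push_cast; ring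
  · intro x
    rw [hKs, hBR, popSize_single]
    simp

lemma onestep (hK0 : K 0 = Measure.dirac 0)
    (hKs : ∀ x : X, K (Finsupp.single x 1) = Pibr x)
    (hKadd : ∀ m m' : X →₀ ℕ, K (m + m') = popConv (K m) (K m'))
    (hρ : 1 < ρ)
    (hBR : ∀ x : X, ∫⁻ m, (popSize m : ℝ≥0∞) ∂(Pibr x) = ENNReal.ofReal ρ)
    (φ : ℕ → X → ℝ) (B : ℝ) (hφ0 : ∀ n x, 0 ≤ φ n x) (hφB : ∀ n x, φ n x ≤ B)
    (hφh : ∀ (n : ℕ) (x : X),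
      φ n x = ∑' y : X, ((∫⁻ a, (a y : ℝ≥0∞) ∂(Pibr x)).toReal / ρ) * φ (n + 1) y)
    (n : ℕ) :
    ∀ m, ∫⁻ a, ENNReal.ofReal (pairR (φ (n + 1)) a) ∂(K m)
      = ENNReal.ofReal ρ * ENNReal.ofReal (pairR (φ n) m) := by
  have hρ0 : (0:ℝ) < ρ := lt_trans one_pos hρ
  refine lintegral_K_ind K hK0 hKadd _ _ ?_ ?_ ?_ ?_ ?_
  · intro a b
    rw [pairR_add, ENNReal.ofReal_add (pairR_nonneg (hφ0 _) a) (pairR_nonneg (hφ0 _) b)]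
  · simp [pairR_zero]
  · simp [pairR_zero]
  · intro a b
    rw [pairR_add, ENNReal.ofReal_add (pairR_nonneg (hφ0 _) a) (pairR_nonneg (hφ0 _) b),
      mul_add]
  · intro x
    rw [hKs]
    set lam := fun y => ∫⁻ a, (a y : ℝ≥0∞) ∂(Pibr x) with hlam
    have hpt : ∀ a : X →₀ ℕ, ENNReal.ofReal (pairR (φ (n + 1)) a)
        = ∑' y, (a y : ℝ≥0∞) * ENNReal.ofReal (φ (n + 1) y) := by
      intro a
      rw [pairR_tsum, ENNReal.ofReal_tsum_of_nonneg
        (fun y => mul_nonneg (Nat.cast_nonneg _) (hφ0 _ _))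
        (summable_of_ne_finset_zero (s := a.support) fun y hy => by
          simp [Finsupp.notMem_support_iff.mp hy])]
      refine tsum_congr fun y => ?_
      rw [ENNReal.ofReal_mul (Nat.cast_nonneg _), ENNReal.ofReal_natCast]
    have hlhs : ∫⁻ a, ENNReal.ofReal (pairR (φ (n + 1)) a) ∂(Pibr x)
        = ∑' y, lam y * ENNReal.ofReal (φ (n + 1) y) := by
      simp only [hpt]
      rw [lintegral_tsum (fun y => (meas_all _).aemeasurable)]
      refine tsum_congr fun y => ?_
      rw [lintegral_mul_const _ (meas_all _)]
    rw [hlhs, pairR_single]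
    have hsum : ρ * φ n x = ∑' y, (lam y).toReal * φ (n + 1) y := by
      rw [hφh n x, ← tsum_mul_left]
      refine tsum_congr fun y => ?_
      field_simp
      exact mul_comm _ _
    have hsummable : Summable fun y => (lam y).toReal * φ (n + 1) y := by
      refine Summable.of_abs (Summable.of_nonneg_of_le (fun y => abs_nonneg _)
        (fun y => ?_) (((lam_summable Pibr ρ hBR x)).mul_right B))
      rw [abs_mul, abs_of_nonneg ENNReal.toReal_nonneg, abs_of_nonneg (hφ0 _ _)]
      exact mul_le_mul_of_nonneg_left (hφB _ _) ENNReal.toReal_nonneg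
    rw [← ENNReal.ofReal_mul (le_of_lt hρ0), hsum,
      ENNReal.ofReal_tsum_of_nonneg
        (fun y => mul_nonneg ENNReal.toReal_nonneg (hφ0 _ _)) hsummable]
    refine tsum_congr fun y => ?_
    rw [ENNReal.ofReal_mul ENNReal.toReal_nonneg,
      ENNReal.ofReal_toReal (lam_ne_top Pibr ρ hBR x y)]

end ChunkC

lemma pairR_shift (f : X → ℝ) (D : ℝ) (m : X →₀ ℕ) :
    pairR (fun x => f x + D) m = pairR f m + D * (popSize m : ℝ) := by
  unfold pairR
  rw [popR, Finsupp.sum, Finsupp.sum, Finsupp.sum, Finset.mul_sum, ← Finset.sum_add_distrib]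
  exact Finset.sum_congr rfl fun x _ => by ring

section ChunkD
variable [Countable X]
variable (Pibr : X → Measure (X →₀ ℕ))
variable (ρ : ℝ)

lemma psum (hρ : 1 < ρ)
    (hBR : ∀ x : X, ∫⁻ m, (popSize m : ℝ≥0∞) ∂(Pibr x) = ENNReal.ofReal ρ) (x : X) :
    ∑' y, (∫⁻ a, (a y : ℝ≥0∞) ∂(Pibr x)).toReal = ρ := by
  rw [← ENNReal.tsum_toReal_eq (fun y => lam_ne_top Pibr ρ hBR x y), lam_tsum Pibr ρ hBR x,
    ENNReal.toReal_ofReal (by linarith)]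

lemma psum_one (hρ : 1 < ρ)
    (hBR : ∀ x : X, ∫⁻ m, (popSize m : ℝ≥0∞) ∂(Pibr x) = ENNReal.ofReal ρ) (x : X) :
    ∑' y, (∫⁻ a, (a y : ℝ≥0∞) ∂(Pibr x)).toReal / ρ = 1 := by
  have h := psum Pibr ρ hρ hBR x
  have : ∑' y, (∫⁻ a, (a y : ℝ≥0∞) ∂(Pibr x)).toReal / ρ
      = (∑' y, (∫⁻ a, (a y : ℝ≥0∞) ∂(Pibr x)).toReal) / ρ := by
    simp only [div_eq_mul_inv]
    exact tsum_mul_right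
  rw [this, h, div_self (by linarith)]

lemma harm_const (hρ : 1 < ρ)
    (hBR : ∀ x : X, ∫⁻ m, (popSize m : ℝ≥0∞) ∂(Pibr x) = ENNReal.ofReal ρ)
    (c : ℝ) (x : X) :
    c = ∑' y : X, ((∫⁻ a, (a y : ℝ≥0∞) ∂(Pibr x)).toReal / ρ) * c := by
  rw [tsum_mul_right, psum_one Pibr ρ hρ hBR x, one_mul]

lemma harm_shift (hρ : 1 < ρ)
    (hBR : ∀ x : X, ∫⁻ m, (popSize m : ℝ≥0∞) ∂(Pibr x) = ENNReal.ofReal ρ)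
    (f : ℕ → X → ℝ) (C : ℝ) (hbd : ∀ (n : ℕ) (x : X), |f n x| ≤ C)
    (hharm : ∀ (n : ℕ) (x : X),
      f n x = ∑' y : X, ((∫⁻ a, (a y : ℝ≥0∞) ∂(Pibr x)).toReal / ρ) * f (n + 1) y)
    (D : ℝ) (hCD : C ≤ D) (n : ℕ) (x : X) :
    f n x + D = ∑' y : X,
      ((∫⁻ a, (a y : ℝ≥0∞) ∂(Pibr x)).toReal / ρ) * (f (n + 1) y + D) := by
  have hρ0 : (0:ℝ) < ρ := lt_trans one_pos hρ
  set p := fun y => (∫⁻ a, (a y : ℝ≥0∞) ∂(Pibr x)).toReal / ρ with hp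
  have hp0 : ∀ y, 0 ≤ p y := fun y => div_nonneg ENNReal.toReal_nonneg hρ0.le
  have hpsum : Summable p := by
    have := (lam_summable Pibr ρ hBR x).div_const ρ
    exact this
  have hs1 : Summable fun y => p y * f (n + 1) y := by
    refine Summable.of_abs (Summable.of_nonneg_of_le (fun y => abs_nonneg _)
      (fun y => ?_) (hpsum.mul_right D))
    rw [abs_mul, abs_of_nonneg (hp0 y)]
    exact mul_le_mul_of_nonneg_left ((hbd _ _).trans hCD) (hp0 y)
  have hs2 : Summable fun y => p y * D := hpsum.mul_right D
  calc f n x + D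
      = (∑' y, p y * f (n + 1) y) + ∑' y, p y * D := by
        rw [← hharm n x, tsum_mul_right, psum_one Pibr ρ hρ hBR x, one_mul]
    _ = ∑' y, (p y * f (n + 1) y + p y * D) := (Summable.tsum_add hs1 hs2).symm
    _ = ∑' y, p y * (f (n + 1) y + D) := tsum_congr fun y => by ring

end ChunkD

section ChunkE
variable [Countable X]
variable (Pibr : X → Measure (X →₀ ℕ))
variable (K : Kernel (X →₀ ℕ) (X →₀ ℕ)) [IsMarkovKernel K]
variable (ρ : ℝ)

/-- one-step expectation for the size component, with `toReal` -/
lemma size_int (hK0 : K 0 = Measure.dirac 0)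
    (hKs : ∀ x : X, K (Finsupp.single x 1) = Pibr x)
    (hKadd : ∀ m m' : X →₀ ℕ, K (m + m') = popConv (K m) (K m'))
    (hBR : ∀ x : X, ∫⁻ m, (popSize m : ℝ≥0∞) ∂(Pibr x) = ENNReal.ofReal ρ)
    (D : ℝ) (hD : 0 ≤ D) (m : X →₀ ℕ) :
    ∫⁻ a, ENNReal.ofReal (D * (popSize a : ℝ)) ∂(K m)
      = ENNReal.ofReal ρ * ENNReal.ofReal (D * (popSize m : ℝ)) := by
  have hpt : ∀ a : X →₀ ℕ, ENNReal.ofReal (D * (popSize a : ℝ))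
      = ENNReal.ofReal D * (popSize a : ℝ≥0∞) := by
    intro a
    rw [ENNReal.ofReal_mul hD, ENNReal.ofReal_natCast]
  simp only [hpt]
  rw [lintegral_const_mul _ (meas_all _), sizestep Pibr K ρ hK0 hKs hKadd hBR m]
  ring

lemma real1 (hPibr : ∀ x, IsProbabilityMeasure (Pibr x))
    (hK0 : K 0 = Measure.dirac 0)
    (hKs : ∀ x : X, K (Finsupp.single x 1) = Pibr x)
    (hKadd : ∀ m m' : X →₀ ℕ, K (m + m') = popConv (K m) (K m'))
    (hρ : 1 < ρ)
    (hBR : ∀ x : X, ∫⁻ m, (popSize m : ℝ≥0∞) ∂(Pibr x) = ENNReal.ofReal ρ)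
    (f : ℕ → X → ℝ) (C : ℝ) (hbd : ∀ (n : ℕ) (x : X), |f n x| ≤ C)
    (hharm : ∀ (n : ℕ) (x : X),
      f n x = ∑' y : X, ((∫⁻ a, (a y : ℝ≥0∞) ∂(Pibr x)).toReal / ρ) * f (n + 1) y)
    (m : X →₀ ℕ) (n : ℕ) :
    ∫ a, (1 / ρ ^ (n + 1)) * pairR (f (n + 1)) a ∂(K m)
      = (1 / ρ ^ n) * pairR (f n) m := by
  have hρ0 : (0:ℝ) < ρ := lt_trans one_pos hρ
  set D := max C 0 with hD
  have hD0 : (0:ℝ) ≤ D := le_max_right _ _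
  have hCD : C ≤ D := le_max_left _ _
  set φ : ℕ → X → ℝ := fun k x => f k x + D with hφ
  have hφ0 : ∀ k x, 0 ≤ φ k x := by
    intro k x
    have := abs_le.mp (hbd k x)
    simp only [hφ]
    linarith [hCD]
  have hφB : ∀ k x, φ k x ≤ 2 * D := by
    intro k x
    have := abs_le.mp (hbd k x)
    simp only [hφ]
    linarith [hCD]
  have hφh : ∀ (k : ℕ) (x : X),
      φ k x = ∑' y : X, ((∫⁻ a, (a y : ℝ≥0∞) ∂(Pibr x)).toReal / ρ) * φ (k + 1) y :=
    fun k x => harm_shift Pibr ρ hρ hBR f C hbd hharm D hCD k x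
  have Eφ := onestep Pibr K ρ hK0 hKs hKadd hρ hBR φ (2 * D) hφ0 hφB hφh n m
  have Epop := size_int Pibr K ρ hK0 hKs hKadd hBR D hD0 m
  set F1 : (X →₀ ℕ) → ℝ≥0∞ := fun a => ENNReal.ofReal (pairR (φ (n + 1)) a) with hF1
  set F2 : (X →₀ ℕ) → ℝ≥0∞ := fun a => ENNReal.ofReal (D * (popSize a : ℝ)) with hF2
  have hi1 : Integrable (fun a => (F1 a).toReal) (K m) := by
    refine integrable_toReal_of_lintegral_ne_top (meas_all _).aemeasurable ?_
    rw [Eφ]; exact ENNReal.mul_ne_top ENNReal.ofReal_ne_top ENNReal.ofReal_ne_top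
  have hi2 : Integrable (fun a => (F2 a).toReal) (K m) := by
    refine integrable_toReal_of_lintegral_ne_top (meas_all _).aemeasurable ?_
    rw [Epop]; exact ENNReal.mul_ne_top ENNReal.ofReal_ne_top ENNReal.ofReal_ne_top
  have hI1 : ∫ a, (F1 a).toReal ∂(K m) = ρ * pairR (φ n) m := by
    rw [integral_toReal (meas_all _).aemeasurable
      (Filter.Eventually.of_forall fun a => ENNReal.ofReal_lt_top), Eφ,
      ENNReal.toReal_mul, ENNReal.toReal_ofReal hρ0.le,
      ENNReal.toReal_ofReal (pairR_nonneg (hφ0 _) m)]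
  have hI2 : ∫ a, (F2 a).toReal ∂(K m) = ρ * (D * (popSize m : ℝ)) := by
    rw [integral_toReal (meas_all _).aemeasurable
      (Filter.Eventually.of_forall fun a => ENNReal.ofReal_lt_top), Epop,
      ENNReal.toReal_mul, ENNReal.toReal_ofReal hρ0.le,
      ENNReal.toReal_ofReal (mul_nonneg hD0 (Nat.cast_nonneg _))]
  have hpt : ∀ a : X →₀ ℕ, (1 / ρ ^ (n + 1)) * pairR (f (n + 1)) a
      = (1 / ρ ^ (n + 1)) * ((F1 a).toReal - (F2 a).toReal) := by
    intro a
    rw [hF1, hF2, ENNReal.toReal_ofReal (pairR_nonneg (hφ0 _) a),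
      ENNReal.toReal_ofReal (mul_nonneg hD0 (Nat.cast_nonneg _))]
    have := pairR_shift (f (n + 1)) D a
    simp only [hφ]
    rw [this]
    ring
  simp only [hpt]
  rw [integral_const_mul, integral_sub hi1 hi2, hI1, hI2]
  have := pairR_shift (f n) D m
  simp only [hφ]
  rw [this]
  have hρn : ρ ^ n ≠ 0 := pow_ne_zero _ (by linarith)
  field_simp
  ring

end ChunkE

section ChunkF
variable [Countable X]

/-- extension of a finite path to an infinite one (by 0) -/
def extPath (N : ℕ) (v : Fin (N + 1) → (X →₀ ℕ)) : ℕ → (X →₀ ℕ) :=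
  fun i => if h : i < N + 1 then v ⟨i, h⟩ else 0

lemma extPath_eq (N : ℕ) (v : Fin (N + 1) → (X →₀ ℕ)) (i : ℕ) (h : i < N + 1) :
    extPath N v i = v ⟨i, h⟩ := dif_pos h

lemma T_meas (N : ℕ) :
    Measurable (fun (ω : ℕ → (X →₀ ℕ)) (i : Fin (N + 1)) => ω i) :=
  measurable_pi_lambda _ fun i => measurable_pi_apply (i : ℕ)

lemma T_preimage (N : ℕ) (v : Fin (N + 1) → (X →₀ ℕ)) :
    (fun (ω : ℕ → (X →₀ ℕ)) (i : Fin (N + 1)) => ω i) ⁻¹' {v}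
      = {ω | ∀ i ≤ N, ω i = extPath N v i} := by
  ext ω
  simp only [Set.mem_preimage, Set.mem_singleton_iff, Set.mem_setOf_eq, funext_iff]
  constructor
  · intro h i hi
    rw [extPath_eq N v i (by omega)]
    exact h ⟨i, by omega⟩
  · intro h i
    have := h i (by omega : (i : ℕ) ≤ N)
    rw [extPath_eq N v i (by omega)] at this
    simpa using this

variable (K : Kernel (X →₀ ℕ) (X →₀ ℕ)) [IsMarkovKernel K]
variable (P : (X →₀ ℕ) → Measure (ℕ → X →₀ ℕ))

lemma mu_singleton
    (hP : ∀ (m : X →₀ ℕ) (n : ℕ) (path : ℕ → X →₀ ℕ),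
      P m {ω | ∀ i ≤ n, ω i = path i}
        = (if path 0 = m then 1 else 0) * ∏ i ∈ Finset.range n, K (path i) {path (i + 1)})
    (m : X →₀ ℕ) (N : ℕ) (v : Fin (N + 1) → (X →₀ ℕ)) :
    (P m).map (fun (ω : ℕ → (X →₀ ℕ)) (i : Fin (N + 1)) => ω i) {v}
      = (if v 0 = m then 1 else 0)
        * ∏ i ∈ Finset.range N, K (extPath N v i) {extPath N v (i + 1)} := by
  rw [Measure.map_apply (T_meas N) (measurableSet_singleton v), T_preimage, hP]
  congr 2

end ChunkF

section ChunkG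
variable [Countable X]

/-- drop the last coordinate of a finite path -/
def front (N : ℕ) (v : Fin (N + 2) → (X →₀ ℕ)) : Fin (N + 1) → (X →₀ ℕ) :=
  fun i => v i.castSucc

lemma front_snoc (N : ℕ) (u : Fin (N + 1) → (X →₀ ℕ)) (a : X →₀ ℕ) :
    front N (Fin.snoc u a) = u := by
  funext i; simp [front, Fin.snoc_castSucc]

/-- pairs (path, last) correspond to longer paths -/
def snocE (N : ℕ) : ((Fin (N + 1) → (X →₀ ℕ)) × (X →₀ ℕ)) ≃ (Fin (N + 2) → (X →₀ ℕ)) where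
  toFun p := Fin.snoc p.1 p.2
  invFun v := (front N v, v (Fin.last (N + 1)))
  left_inv p := by
    refine Prod.ext ?_ ?_
    · simp [front_snoc]
    · simp [Fin.snoc_last]
  right_inv v := by
    funext i
    induction i using Fin.lastCases with
    | last => simp [Fin.snoc_last]
    | cast i => simp [front, Fin.snoc_castSucc]

variable (K : Kernel (X →₀ ℕ) (X →₀ ℕ)) [IsMarkovKernel K]
variable (P : (X →₀ ℕ) → Measure (ℕ → X →₀ ℕ))

variable (hP : ∀ (m : X →₀ ℕ) (n : ℕ) (path : ℕ → X →₀ ℕ),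
      P m {ω | ∀ i ≤ n, ω i = path i}
        = (if path 0 = m then 1 else 0) * ∏ i ∈ Finset.range n, K (path i) {path (i + 1)})

include hP in
lemma mu_sing_succ (m : X →₀ ℕ) (N : ℕ) (v : Fin (N + 2) → (X →₀ ℕ)) :
    (P m).map (fun (ω : ℕ → (X →₀ ℕ)) (i : Fin (N + 2)) => ω i) {v}
      = (P m).map (fun (ω : ℕ → (X →₀ ℕ)) (i : Fin (N + 1)) => ω i) {front N v}
        * K (front N v (Fin.last N)) {v (Fin.last (N + 1))} := by
  rw [mu_singleton K P hP m (N + 1) v, mu_singleton K P hP m N (front N v),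
    Finset.prod_range_succ]
  have hagree : ∀ i ≤ N, extPath (N + 1) v i = extPath N (front N v) i := by
    intro i hi
    rw [extPath_eq (N + 1) v i (by omega), extPath_eq N (front N v) i (by omega)]
    rfl
  have h0 : front N v 0 = v 0 := rfl
  have hprod : ∏ i ∈ Finset.range N, K (extPath (N + 1) v i) {extPath (N + 1) v (i + 1)}
      = ∏ i ∈ Finset.range N, K (extPath N (front N v) i) {extPath N (front N v) (i + 1)} := by
    refine Finset.prod_congr rfl fun i hi => ?_
    have hiN : i < N := Finset.mem_range.mp hi
    rw [hagree i (by omega), hagree (i + 1) (by omega)]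
  have hlast1 : extPath (N + 1) v N = front N v (Fin.last N) := by
    rw [extPath_eq (N + 1) v N (by omega)]; rfl
  have hlast2 : extPath (N + 1) v (N + 1) = v (Fin.last (N + 1)) := by
    rw [extPath_eq (N + 1) v (N + 1) (by omega)]; rfl
  rw [hprod, hlast1, hlast2, h0]
  ring

lemma lsum (m : X →₀ ℕ) (N : ℕ) (H : (Fin (N + 1) → (X →₀ ℕ)) → ℝ≥0∞) :
    ∫⁻ ω, H (fun i => ω i) ∂(P m)
      = ∑' v, H v * (P m).map (fun (ω : ℕ → (X →₀ ℕ)) (i : Fin (N + 1)) => ω i) {v} := by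
  rw [← lintegral_map (measurable_of_countable H) (T_meas N), lintegral_countable']

include hP in
lemma fact_succ (m : X →₀ ℕ) (N : ℕ) (G : (Fin (N + 1) → (X →₀ ℕ)) → ℝ≥0∞)
    (Ψ : (X →₀ ℕ) → ℝ≥0∞) :
    (∑' v : Fin (N + 2) → (X →₀ ℕ), (G (front N v) * Ψ (v (Fin.last (N + 1))))
        * (P m).map (fun (ω : ℕ → (X →₀ ℕ)) (i : Fin (N + 2)) => ω i) {v})
      = ∑' u : Fin (N + 1) → (X →₀ ℕ), (G u * ∫⁻ a, Ψ a ∂(K (u (Fin.last N))))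
        * (P m).map (fun (ω : ℕ → (X →₀ ℕ)) (i : Fin (N + 1)) => ω i) {u} := by
  rw [← (snocE N).tsum_eq, ENNReal.tsum_prod']
  refine tsum_congr fun u => ?_
  calc ∑' a, (G (front N (snocE N (u, a))) * Ψ ((snocE N (u, a)) (Fin.last (N + 1))))
        * (P m).map (fun (ω : ℕ → (X →₀ ℕ)) (i : Fin (N + 2)) => ω i) {snocE N (u, a)}
      = ∑' a, (G u * (P m).map (fun (ω : ℕ → (X →₀ ℕ)) (i : Fin (N + 1)) => ω i) {u})
          * (Ψ a * K (u (Fin.last N)) {a}) := by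
        refine tsum_congr fun a => ?_
        have h1 : front N (snocE N (u, a)) = u := front_snoc N u a
        have h2 : (snocE N (u, a)) (Fin.last (N + 1)) = a := by
          show (Fin.snoc u a : Fin (N + 2) → (X →₀ ℕ)) (Fin.last (N + 1)) = a
          exact Fin.snoc_last _ _
        rw [mu_sing_succ K P hP m N, h1, h2]
        ring
    _ = (G u * (P m).map (fun (ω : ℕ → (X →₀ ℕ)) (i : Fin (N + 1)) => ω i) {u})
          * ∑' a, Ψ a * K (u (Fin.last N)) {a} := ENNReal.tsum_mul_left
    _ = (G u * ∫⁻ a, Ψ a ∂(K (u (Fin.last N))))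
          * (P m).map (fun (ω : ℕ → (X →₀ ℕ)) (i : Fin (N + 1)) => ω i) {u} := by
        rw [← lintegral_countable']
        ring

include hP in
lemma gen_step (m : X →₀ ℕ) (n : ℕ) (S : Set (Fin (n + 1) → (X →₀ ℕ)))
    (Ψ Φ : (X →₀ ℕ) → ℝ≥0∞)
    (hstep : ∀ b, ∫⁻ a, Ψ a ∂(K b) = Φ b) :
    ∫⁻ ω in (fun (ω : ℕ → (X →₀ ℕ)) (i : Fin (n + 1)) => ω i) ⁻¹' S, Ψ (ω (n + 1)) ∂(P m)
      = ∫⁻ ω in (fun (ω : ℕ → (X →₀ ℕ)) (i : Fin (n + 1)) => ω i) ⁻¹' S, Φ (ω n) ∂(P m) := by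
  have hSmeas : MeasurableSet S := (Set.to_countable S).measurableSet
  have hs : MeasurableSet ((fun (ω : ℕ → (X →₀ ℕ)) (i : Fin (n + 1)) => ω i) ⁻¹' S) :=
    (T_meas n) hSmeas
  rw [← lintegral_indicator hs, ← lintegral_indicator hs]
  have hL : ∀ ω : ℕ → (X →₀ ℕ),
      ((fun (ω : ℕ → (X →₀ ℕ)) (i : Fin (n + 1)) => ω i) ⁻¹' S).indicator
        (fun ω => Ψ (ω (n + 1))) ω
      = (fun v : Fin (n + 2) → (X →₀ ℕ) =>
          (if front n v ∈ S then (1:ℝ≥0∞) else 0) * Ψ (v (Fin.last (n + 1))))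
        (fun i => ω i) := by
    intro ω
    have hfr : front n (fun i : Fin (n + 2) => ω i) = fun i : Fin (n + 1) => ω i := rfl
    rw [Set.indicator_apply]
    simp only [hfr, Set.mem_preimage]
    split_ifs with h
    · rw [one_mul]; rfl
    · rw [zero_mul]
  have hR : ∀ ω : ℕ → (X →₀ ℕ),
      ((fun (ω : ℕ → (X →₀ ℕ)) (i : Fin (n + 1)) => ω i) ⁻¹' S).indicator
        (fun ω => Φ (ω n)) ω
      = (fun u : Fin (n + 1) → (X →₀ ℕ) =>
          (if u ∈ S then (1:ℝ≥0∞) else 0) * Φ (u (Fin.last n)))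
        (fun i => ω i) := by
    intro ω
    rw [Set.indicator_apply]
    simp only [Set.mem_preimage]
    split_ifs with h
    · rw [one_mul]; rfl
    · rw [zero_mul]
  calc ∫⁻ ω, ((fun (ω : ℕ → (X →₀ ℕ)) (i : Fin (n + 1)) => ω i) ⁻¹' S).indicator
        (fun ω => Ψ (ω (n + 1))) ω ∂(P m)
      = ∫⁻ ω, (fun v : Fin (n + 2) → (X →₀ ℕ) =>
          (if front n v ∈ S then (1:ℝ≥0∞) else 0) * Ψ (v (Fin.last (n + 1))))
          (fun i => ω i) ∂(P m) := lintegral_congr hL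
    _ = ∑' v : Fin (n + 2) → (X →₀ ℕ),
          ((if front n v ∈ S then (1:ℝ≥0∞) else 0) * Ψ (v (Fin.last (n + 1))))
          * (P m).map (fun (ω : ℕ → (X →₀ ℕ)) (i : Fin (n + 2)) => ω i) {v} :=
        lsum P m (n + 1)
          (fun v : Fin (n + 2) → (X →₀ ℕ) =>
            (if front n v ∈ S then (1:ℝ≥0∞) else 0) * Ψ (v (Fin.last (n + 1))))
    _ = ∑' u : Fin (n + 1) → (X →₀ ℕ),
          ((if u ∈ S then (1:ℝ≥0∞) else 0) * ∫⁻ a, Ψ a ∂(K (u (Fin.last n))))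
          * (P m).map (fun (ω : ℕ → (X →₀ ℕ)) (i : Fin (n + 1)) => ω i) {u} :=
        fact_succ K P hP m n (fun u => if u ∈ S then (1:ℝ≥0∞) else 0) Ψ
    _ = ∑' u : Fin (n + 1) → (X →₀ ℕ),
          ((if u ∈ S then (1:ℝ≥0∞) else 0) * Φ (u (Fin.last n)))
          * (P m).map (fun (ω : ℕ → (X →₀ ℕ)) (i : Fin (n + 1)) => ω i) {u} := by
        refine tsum_congr fun u => ?_
        rw [hstep]
    _ = ∫⁻ ω, (fun u : Fin (n + 1) → (X →₀ ℕ) =>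
          (if u ∈ S then (1:ℝ≥0∞) else 0) * Φ (u (Fin.last n)))
          (fun i => ω i) ∂(P m) := (lsum P m n _).symm
    _ = ∫⁻ ω, ((fun (ω : ℕ → (X →₀ ℕ)) (i : Fin (n + 1)) => ω i) ⁻¹' S).indicator
        (fun ω => Φ (ω n)) ω ∂(P m) := (lintegral_congr hR).symm

include hP in
lemma law0 (m : X →₀ ℕ) (H : (X →₀ ℕ) → ℝ≥0∞) :
    ∫⁻ ω, H (ω 0) ∂(P m) = H m := by
  have h := lsum P m 0 (fun v => H (v 0))
  have h0 : ∀ ω : ℕ → (X →₀ ℕ), (fun v : Fin 1 → (X →₀ ℕ) => H (v 0)) (fun i => ω i)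
      = H (ω 0) := fun ω => rfl
  rw [lintegral_congr h0] at h
  rw [h]
  let e : (X →₀ ℕ) ≃ (Fin 1 → (X →₀ ℕ)) :=
    ⟨fun b _ => b, fun v => v 0, fun b => rfl, fun v => funext fun i => by
      have : i = 0 := Subsingleton.elim i 0
      rw [this]⟩
  rw [← e.tsum_eq]
  have hterm : ∀ b : X →₀ ℕ,
      H ((e b) 0) * (P m).map (fun (ω : ℕ → (X →₀ ℕ)) (i : Fin 1) => ω i) {e b}
      = H b * (if b = m then 1 else 0) := by
    intro b
    have heb : e b = fun _ : Fin 1 => b := rfl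
    rw [mu_singleton K P hP m 0 (e b)]
    simp [heb]
  simp only [hterm]
  rw [tsum_eq_single m (fun b hb => by simp [hb])]
  simp

end ChunkG

section ChunkH
variable [Countable X]
variable (Pibr : X → Measure (X →₀ ℕ))
variable (K : Kernel (X →₀ ℕ) (X →₀ ℕ)) [IsMarkovKernel K]
variable (P : (X →₀ ℕ) → Measure (ℕ → X →₀ ℕ))
variable (ρ : ℝ)

variable (hP : ∀ (m : X →₀ ℕ) (n : ℕ) (path : ℕ → X →₀ ℕ),
      P m {ω | ∀ i ≤ n, ω i = path i}
        = (if path 0 = m then 1 else 0) * ∏ i ∈ Finset.range n, K (path i) {path (i + 1)})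

lemma filt_le (n : ℕ) :
    (coordFil (X →₀ ℕ)) n
      ≤ MeasurableSpace.comap (fun (ω : ℕ → X →₀ ℕ) (i : Fin (n + 1)) => ω i) ⊤ := by
  refine iSup₂_le fun i hi => ?_
  have hi' : (i : ℕ) ≤ n := hi
  intro s hs
  obtain ⟨A, -, rfl⟩ := hs
  exact ⟨(fun v : Fin (n + 1) → (X →₀ ℕ) => v ⟨i, by omega⟩) ⁻¹' A,
    MeasurableSpace.measurableSet_top, rfl⟩

lemma eval_meas_filt (n : ℕ) :
    Measurable[(coordFil (X →₀ ℕ)) n] (fun ω : ℕ → X →₀ ℕ => ω n) := by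
  refine measurable_iff_comap_le.mpr ?_
  exact le_biSup (fun i => MeasurableSpace.comap (fun ω : ℕ → X →₀ ℕ => ω i) ⊤)
    (Set.mem_Iic.mpr le_rfl)

include hP in
lemma pop_lint (hK0 : K 0 = Measure.dirac 0)
    (hKs : ∀ x : X, K (Finsupp.single x 1) = Pibr x)
    (hKadd : ∀ m m' : X →₀ ℕ, K (m + m') = popConv (K m) (K m'))
    (hBR : ∀ x : X, ∫⁻ m, (popSize m : ℝ≥0∞) ∂(Pibr x) = ENNReal.ofReal ρ)
    (m : X →₀ ℕ) :
    ∀ k, ∫⁻ ω, (popSize (ω k) : ℝ≥0∞) ∂(P m)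
      = (ENNReal.ofReal ρ) ^ k * (popSize m : ℝ≥0∞) := by
  intro k
  induction k with
  | zero =>
    rw [law0 K P hP m (fun b => (popSize b : ℝ≥0∞))]
    simp
  | succ k ih =>
    have h := gen_step K P hP m k Set.univ (fun b => (popSize b : ℝ≥0∞))
      (fun b => ENNReal.ofReal ρ * (popSize b : ℝ≥0∞))
      (fun b => sizestep Pibr K ρ hK0 hKs hKadd hBR b)
    rw [Set.preimage_univ, Measure.restrict_univ] at h
    rw [h]
    rw [show (∫⁻ (ω : ℕ → X →₀ ℕ), (fun b => ENNReal.ofReal ρ * (popSize b : ℝ≥0∞)) (ω k) ∂P m)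
        = ENNReal.ofReal ρ * ∫⁻ (ω : ℕ → X →₀ ℕ), (popSize (ω k) : ℝ≥0∞) ∂P m from
      lintegral_const_mul _ ((meas_all (fun b : X →₀ ℕ => (popSize b : ℝ≥0∞))).comp (measurable_pi_apply k)), ih, pow_succ]
    ring

end ChunkH


/-- Corollary 4.7, harmonic martingales. Under (BR) with `ρ ∈ (1,∞)`,
for a uniformly bounded space-time harmonic sequence `(f_n)` of the base chain, the
functions `g_n(m) = ρ^{−n}·⟨m, f_n⟩` satisfy `∫ g_{n+1} dK(m) = g_n(m)`, and for every
initial population the sequence `W^f_n = ρ^{−n}·⟨M_n, f_n⟩` is a martingale under `ℙ_m`. -/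
theorem harmonic_martingale [Countable X]
    (Pibr : X → Measure (X →₀ ℕ)) (hPibr : ∀ x, IsProbabilityMeasure (Pibr x))
    (K : Kernel (X →₀ ℕ) (X →₀ ℕ)) [IsMarkovKernel K]
    (hK0 : K 0 = Measure.dirac 0)
    (hKs : ∀ x : X, K (Finsupp.single x 1) = Pibr x)
    (hKadd : ∀ m m' : X →₀ ℕ, K (m + m') = popConv (K m) (K m'))
    (ρ : ℝ) (hρ : 1 < ρ)
    (hBR : ∀ x : X, ∫⁻ m, (popSize m : ℝ≥0∞) ∂(Pibr x) = ENNReal.ofReal ρ)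
    (f : ℕ → X → ℝ) (C : ℝ) (hbd : ∀ (n : ℕ) (x : X), |f n x| ≤ C)
    -- space-time harmonicity for the base chain with p(x,y) = π̄_{x,y}/ρ
    (hharm : ∀ (n : ℕ) (x : X),
      f n x = ∑' y : X, ((∫⁻ m, (m y : ℝ≥0∞) ∂(Pibr x)).toReal / ρ) * f (n + 1) y)
    (P : (X →₀ ℕ) → Measure (ℕ → X →₀ ℕ)) (hPprob : ∀ m, IsProbabilityMeasure (P m))
    (hP : ∀ (m : X →₀ ℕ) (n : ℕ) (path : ℕ → X →₀ ℕ),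
      P m {ω | ∀ i ≤ n, ω i = path i}
        = (if path 0 = m then 1 else 0) * ∏ i ∈ Finset.range n, K (path i) {path (i + 1)}) :
    (∀ (m : X →₀ ℕ) (n : ℕ),
      ∫ m', (1 / ρ ^ (n + 1)) * (m'.sum fun x k => (k : ℝ) * f (n + 1) x) ∂(K m)
        = (1 / ρ ^ n) * (m.sum fun x k => (k : ℝ) * f n x)) ∧
    ∀ m : X →₀ ℕ,
      Martingale
        (fun (n : ℕ) (ω : ℕ → X →₀ ℕ) => (1 / ρ ^ n) * ((ω n).sum fun x k => (k : ℝ) * f n x))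
        (coordFil (X →₀ ℕ)) (P m) := by
  have hρ0 : (0:ℝ) < ρ := lt_trans one_pos hρ
  have hρk : ∀ k : ℕ, (0:ℝ) < ρ ^ k := fun k => pow_pos hρ0 k
  constructor
  · intro m n
    exact real1 Pibr K ρ hPibr hK0 hKs hKadd hρ hBR f C hbd hharm m n
  intro m
  haveI := hPprob m
  set D := max C 0 with hD
  have hD0 : (0:ℝ) ≤ D := le_max_right _ _
  have hCD : C ≤ D := le_max_left _ _
  set φ : ℕ → X → ℝ := fun k x => f k x + D with hφ
  have hφ0 : ∀ k x, 0 ≤ φ k x := by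
    intro k x
    have := abs_le.mp (hbd k x)
    simp only [hφ]
    linarith [hCD]
  have hφB : ∀ k x, φ k x ≤ 2 * D := by
    intro k x
    have := abs_le.mp (hbd k x)
    simp only [hφ]
    linarith [hCD]
  have hφh : ∀ (k : ℕ) (x : X),
      φ k x = ∑' y : X, ((∫⁻ a, (a y : ℝ≥0∞) ∂(Pibr x)).toReal / ρ) * φ (k + 1) y :=
    fun k x => harm_shift Pibr ρ hρ hBR f C hbd hharm D hCD k x
  -- pointwise decomposition of the martingale into two nonnegative parts
  have hWpt : ∀ (k : ℕ) (b : X →₀ ℕ),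
      (1 / ρ ^ k) * (b.sum fun x j => (j : ℝ) * f k x)
        = (ENNReal.ofReal (1 / ρ ^ k) * ENNReal.ofReal (pairR (φ k) b)).toReal
          - (ENNReal.ofReal (1 / ρ ^ k)
              * (ENNReal.ofReal D * (popSize b : ℝ≥0∞))).toReal := by
    intro k b
    rw [ENNReal.toReal_mul, ENNReal.toReal_mul, ENNReal.toReal_mul,
      ENNReal.toReal_ofReal (by positivity : (0:ℝ) ≤ 1 / ρ ^ k),
      ENNReal.toReal_ofReal (pairR_nonneg (hφ0 k) b),
      ENNReal.toReal_ofReal hD0, ENNReal.toReal_natCast]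
    have hsh : pairR (φ k) b = pairR (f k) b + D * (popSize b : ℝ) := pairR_shift (f k) D b
    have : (b.sum fun x j => (j : ℝ) * f k x) = pairR (f k) b := rfl
    rw [this, hsh]
    ring
  -- one-step kernel identities for both parts
  have hstep1 : ∀ (k : ℕ) (b : X →₀ ℕ),
      ∫⁻ a, ENNReal.ofReal (1 / ρ ^ (k + 1)) * ENNReal.ofReal (pairR (φ (k + 1)) a) ∂(K b)
        = ENNReal.ofReal (1 / ρ ^ k) * ENNReal.ofReal (pairR (φ k) b) := by
    intro k b
    rw [lintegral_const_mul _ (meas_all _),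
      onestep Pibr K ρ hK0 hKs hKadd hρ hBR φ (2 * D) hφ0 hφB hφh k b, ← mul_assoc,
      ← ENNReal.ofReal_mul (by positivity : (0:ℝ) ≤ 1 / ρ ^ (k + 1))]
    have hne : ρ ^ k ≠ 0 := (hρk k).ne'
    have h : 1 / ρ ^ (k + 1) * ρ = 1 / ρ ^ k := by
      field_simp [pow_succ]
      ring
    rw [h]
  have hstep2 : ∀ (k : ℕ) (b : X →₀ ℕ),
      ∫⁻ a, ENNReal.ofReal (1 / ρ ^ (k + 1))
          * (ENNReal.ofReal D * (popSize a : ℝ≥0∞)) ∂(K b)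
        = ENNReal.ofReal (1 / ρ ^ k) * (ENNReal.ofReal D * (popSize b : ℝ≥0∞)) := by
    intro k b
    have hc : ENNReal.ofReal (1 / ρ ^ (k + 1)) * ENNReal.ofReal ρ
        = ENNReal.ofReal (1 / ρ ^ k) := by
      rw [← ENNReal.ofReal_mul (by positivity : (0:ℝ) ≤ 1 / ρ ^ (k + 1))]
      congr 1
      have hne : ρ ^ k ≠ 0 := (hρk k).ne'
      field_simp [pow_succ]
      ring
    rw [lintegral_const_mul _ ((meas_all _).const_mul _),
      lintegral_const_mul _ (meas_all _),
      sizestep Pibr K ρ hK0 hKs hKadd hBR b]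
    calc ENNReal.ofReal (1 / ρ ^ (k + 1))
          * (ENNReal.ofReal D * (ENNReal.ofReal ρ * (popSize b : ℝ≥0∞)))
        = (ENNReal.ofReal (1 / ρ ^ (k + 1)) * ENNReal.ofReal ρ)
          * (ENNReal.ofReal D * (popSize b : ℝ≥0∞)) := by ring
      _ = ENNReal.ofReal (1 / ρ ^ k) * (ENNReal.ofReal D * (popSize b : ℝ≥0∞)) := by
          rw [hc]
  -- measurability of the parts on the path space
  have hmeas1 : ∀ (k j : ℕ), Measurable fun ω : ℕ → X →₀ ℕ =>
      ENNReal.ofReal (1 / ρ ^ k) * ENNReal.ofReal (pairR (φ k) (ω j)) :=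
    fun k j => ((meas_all fun b : X →₀ ℕ => ENNReal.ofReal (pairR (φ k) b)).comp
      (measurable_pi_apply j)).const_mul _
  have hmeas2 : ∀ (k j : ℕ), Measurable fun ω : ℕ → X →₀ ℕ =>
      ENNReal.ofReal (1 / ρ ^ k) * (ENNReal.ofReal D * (popSize (ω j) : ℝ≥0∞)) :=
    fun k j => (((meas_all fun b : X →₀ ℕ => (popSize b : ℝ≥0∞)).comp
      (measurable_pi_apply j)).const_mul _).const_mul _
  -- finiteness of the total lintegrals
  have hpop : ∀ k : ℕ, ∫⁻ ω, (popSize (ω k) : ℝ≥0∞) ∂(P m)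
      = (ENNReal.ofReal ρ) ^ k * (popSize m : ℝ≥0∞) :=
    pop_lint Pibr K P ρ hP hK0 hKs hKadd hBR m
  have hfin1 : ∀ k : ℕ,
      ∫⁻ ω, ENNReal.ofReal (1 / ρ ^ k) * ENNReal.ofReal (pairR (φ k) (ω k)) ∂(P m) ≠ ∞ := by
    intro k
    have hb : ∀ ω : ℕ → X →₀ ℕ,
        ENNReal.ofReal (1 / ρ ^ k) * ENNReal.ofReal (pairR (φ k) (ω k))
          ≤ ENNReal.ofReal (1 / ρ ^ k)
            * (ENNReal.ofReal (2 * D) * (popSize (ω k) : ℝ≥0∞)) := by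
      intro ω
      refine mul_le_mul_right ?_ _
      refine le_trans (ENNReal.ofReal_le_ofReal (pairR_le (hφB k) (hφ0 k) (ω k))) ?_
      rw [ENNReal.ofReal_mul (by positivity), ENNReal.ofReal_natCast]
    refine ne_top_of_le_ne_top ?_ (lintegral_mono hb)
    have h1 : ∫⁻ ω, ENNReal.ofReal (1 / ρ ^ k)
          * (ENNReal.ofReal (2 * D) * (popSize (ω k) : ℝ≥0∞)) ∂(P m)
        = ENNReal.ofReal (1 / ρ ^ k)
          * ∫⁻ ω, ENNReal.ofReal (2 * D) * (popSize (ω k) : ℝ≥0∞) ∂(P m) :=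
      lintegral_const_mul _ (((meas_all fun b : X →₀ ℕ => (popSize b : ℝ≥0∞)).comp
        (measurable_pi_apply k)).const_mul _)
    have h2 : ∫⁻ ω, ENNReal.ofReal (2 * D) * (popSize (ω k) : ℝ≥0∞) ∂(P m)
        = ENNReal.ofReal (2 * D) * ∫⁻ ω, (popSize (ω k) : ℝ≥0∞) ∂(P m) :=
      lintegral_const_mul _ ((meas_all fun b : X →₀ ℕ => (popSize b : ℝ≥0∞)).comp
        (measurable_pi_apply k))
    rw [h1, h2, hpop k]
    exact ENNReal.mul_ne_top ENNReal.ofReal_ne_top (ENNReal.mul_ne_top ENNReal.ofReal_ne_top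
      (ENNReal.mul_ne_top (ENNReal.pow_ne_top ENNReal.ofReal_ne_top) (ENNReal.natCast_ne_top _)))
  have hfin2 : ∀ k : ℕ,
      ∫⁻ ω, ENNReal.ofReal (1 / ρ ^ k)
        * (ENNReal.ofReal D * (popSize (ω k) : ℝ≥0∞)) ∂(P m) ≠ ∞ := by
    intro k
    have h1 : ∫⁻ ω, ENNReal.ofReal (1 / ρ ^ k)
          * (ENNReal.ofReal D * (popSize (ω k) : ℝ≥0∞)) ∂(P m)
        = ENNReal.ofReal (1 / ρ ^ k)
          * ∫⁻ ω, ENNReal.ofReal D * (popSize (ω k) : ℝ≥0∞) ∂(P m) :=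
      lintegral_const_mul _ (((meas_all fun b : X →₀ ℕ => (popSize b : ℝ≥0∞)).comp
        (measurable_pi_apply k)).const_mul _)
    have h2 : ∫⁻ ω, ENNReal.ofReal D * (popSize (ω k) : ℝ≥0∞) ∂(P m)
        = ENNReal.ofReal D * ∫⁻ ω, (popSize (ω k) : ℝ≥0∞) ∂(P m) :=
      lintegral_const_mul _ ((meas_all fun b : X →₀ ℕ => (popSize b : ℝ≥0∞)).comp
        (measurable_pi_apply k))
    rw [h1, h2, hpop k]
    exact ENNReal.mul_ne_top ENNReal.ofReal_ne_top (ENNReal.mul_ne_top ENNReal.ofReal_ne_top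
      (ENNReal.mul_ne_top (ENNReal.pow_ne_top ENNReal.ofReal_ne_top) (ENNReal.natCast_ne_top _)))
  -- integrability of the two parts
  have hintA : ∀ k : ℕ, Integrable (fun ω : ℕ → X →₀ ℕ =>
      (ENNReal.ofReal (1 / ρ ^ k) * ENNReal.ofReal (pairR (φ k) (ω k))).toReal) (P m) :=
    fun k => integrable_toReal_of_lintegral_ne_top (hmeas1 k k).aemeasurable (hfin1 k)
  have hintB : ∀ k : ℕ, Integrable (fun ω : ℕ → X →₀ ℕ =>
      (ENNReal.ofReal (1 / ρ ^ k)
        * (ENNReal.ofReal D * (popSize (ω k) : ℝ≥0∞))).toReal) (P m) :=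
    fun k => integrable_toReal_of_lintegral_ne_top (hmeas2 k k).aemeasurable (hfin2 k)
  have hint : ∀ k : ℕ, Integrable
      (fun ω : ℕ → X →₀ ℕ => (1 / ρ ^ k) * ((ω k).sum fun x j => (j : ℝ) * f k x)) (P m) := by
    intro k
    have hfe : (fun ω : ℕ → X →₀ ℕ => (1 / ρ ^ k) * ((ω k).sum fun x j => (j : ℝ) * f k x))
        = fun ω => (ENNReal.ofReal (1 / ρ ^ k) * ENNReal.ofReal (pairR (φ k) (ω k))).toReal
          - (ENNReal.ofReal (1 / ρ ^ k)
              * (ENNReal.ofReal D * (popSize (ω k) : ℝ≥0∞))).toReal :=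
      funext fun ω => hWpt k (ω k)
    rw [hfe]
    exact (hintA k).sub (hintB k)
  -- adaptedness
  have hadp : StronglyAdapted (coordFil (X →₀ ℕ))
      (fun (k : ℕ) (ω : ℕ → X →₀ ℕ) => (1 / ρ ^ k) * ((ω k).sum fun x j => (j : ℝ) * f k x)) := by
    intro k
    have : Measurable[(coordFil (X →₀ ℕ)) k]
        (fun ω : ℕ → X →₀ ℕ => (1 / ρ ^ k) * pairR (f k) (ω k)) :=
      ((meas_all (pairR (f k))).comp (eval_meas_filt k)).const_mul _
    exact this.stronglyMeasurable
  -- the set-integral equality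
  refine martingale_of_setIntegral_eq_succ hadp hint ?_
  intro i s hs
  obtain ⟨S, -, hSpre⟩ := MeasurableSpace.measurableSet_comap.mp (filt_le i s hs)
  subst hSpre
  have hSmeas : MeasurableSet
      ((fun (ω : ℕ → X →₀ ℕ) (j : Fin (i + 1)) => ω j) ⁻¹' S) :=
    (T_meas i) (Set.to_countable S).measurableSet
  set s' := (fun (ω : ℕ → X →₀ ℕ) (j : Fin (i + 1)) => ω j) ⁻¹' S with hs'
  -- convert both set integrals into differences of set lintegrals
  have hconv : ∀ k : ℕ,
      ∫ ω in s', (1 / ρ ^ k) * ((ω k).sum fun x l => (l : ℝ) * f k x) ∂(P m)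
        = (∫⁻ ω in s', ENNReal.ofReal (1 / ρ ^ k)
              * ENNReal.ofReal (pairR (φ k) (ω k)) ∂(P m)).toReal
          - (∫⁻ ω in s', ENNReal.ofReal (1 / ρ ^ k)
              * (ENNReal.ofReal D * (popSize (ω k) : ℝ≥0∞)) ∂(P m)).toReal := by
    intro k
    have hfe : (fun ω : ℕ → X →₀ ℕ => (1 / ρ ^ k) * ((ω k).sum fun x j => (j : ℝ) * f k x))
        = fun ω => (ENNReal.ofReal (1 / ρ ^ k) * ENNReal.ofReal (pairR (φ k) (ω k))).toReal
          - (ENNReal.ofReal (1 / ρ ^ k)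
              * (ENNReal.ofReal D * (popSize (ω k) : ℝ≥0∞))).toReal :=
      funext fun ω => hWpt k (ω k)
    rw [hfe, integral_sub ((hintA k).integrableOn) ((hintB k).integrableOn),
      integral_toReal ((hmeas1 k k).aemeasurable.restrict)
        (Filter.Eventually.of_forall fun ω => ENNReal.mul_lt_top
          ENNReal.ofReal_lt_top ENNReal.ofReal_lt_top),
      integral_toReal ((hmeas2 k k).aemeasurable.restrict)
        (Filter.Eventually.of_forall fun ω => ENNReal.mul_lt_top ENNReal.ofReal_lt_top
          (ENNReal.mul_lt_top ENNReal.ofReal_lt_top (ENNReal.natCast_lt_top _)))]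
  have hg1 : ∫⁻ ω in s', ENNReal.ofReal (1 / ρ ^ (i + 1))
        * ENNReal.ofReal (pairR (φ (i + 1)) (ω (i + 1))) ∂(P m)
      = ∫⁻ ω in s', ENNReal.ofReal (1 / ρ ^ i)
        * ENNReal.ofReal (pairR (φ i) (ω i)) ∂(P m) :=
    gen_step K P hP m i S
      (fun a => ENNReal.ofReal (1 / ρ ^ (i + 1)) * ENNReal.ofReal (pairR (φ (i + 1)) a))
      (fun b => ENNReal.ofReal (1 / ρ ^ i) * ENNReal.ofReal (pairR (φ i) b))
      (hstep1 i)
  have hg2 : ∫⁻ ω in s', ENNReal.ofReal (1 / ρ ^ (i + 1))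
        * (ENNReal.ofReal D * (popSize (ω (i + 1)) : ℝ≥0∞)) ∂(P m)
      = ∫⁻ ω in s', ENNReal.ofReal (1 / ρ ^ i)
        * (ENNReal.ofReal D * (popSize (ω i) : ℝ≥0∞)) ∂(P m) :=
    gen_step K P hP m i S
      (fun a => ENNReal.ofReal (1 / ρ ^ (i + 1)) * (ENNReal.ofReal D * (popSize a : ℝ≥0∞)))
      (fun b => ENNReal.ofReal (1 / ρ ^ i) * (ENNReal.ofReal D * (popSize b : ℝ≥0∞)))
      (hstep2 i)
  rw [hconv i, hconv (i + 1), hg1, hg2]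


end BMC
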